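/- Let N ≥ 1. For any functions x : {1,…,N} × {0,1} → {−1,1} and c : {−1,1}^N → {−1,1}, the sum ∑_{(h_1,…,h_N) ∈ {−1,1}^N} c(h_1,…,h_N) ∏_{i=1}^N (x_i(0) + h_i · x_i(1)) equals either 2^N or −2^N; in particular its absolute value equals 2^N. -/
import Mathlib


/-- For `N ≥ 1`, any `±1`-valued observables `x i b` and any `±1`-valued
function `c` on sign vectors, the sum
`∑_{h ∈ {-1,1}^N} c(h) ∏ i (x i 0 + h i * x i 1)` equals `±2^N`,
and in particular its absolute value is `2^N`. -/
theorem stmt0 (N : ℕ) (hN : 1 ≤ N) (x : Fin N → Fin 2 → ℤ)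
    (hx : ∀ i b, x i b = 1 ∨ x i b = -1)
    (c : (Fin N → ℤ) → ℤ)
    (hc : ∀ h : Fin N → ℤ, (∀ i, h i = 1 ∨ h i = -1) → c h = 1 ∨ c h = -1) :
    ((∑ σ : Fin N → Bool,
        c (fun i => if σ i then -1 else 1) *
          ∏ i, (x i 0 + (if σ i then -1 else 1) * x i 1)) = 2 ^ N ∨
     (∑ σ : Fin N → Bool,
        c (fun i => if σ i then -1 else 1) *
          ∏ i, (x i 0 + (if σ i then -1 else 1) * x i 1)) = -2 ^ N) ∧
    |∑ σ : Fin N → Bool,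
        c (fun i => if σ i then -1 else 1) *
          ∏ i, (x i 0 + (if σ i then -1 else 1) * x i 1)| = 2 ^ N := by
  classical
  set σ₀ : Fin N → Bool := fun i => decide (x i 0 ≠ x i 1) with hσ₀
  have hzero : ∀ σ : Fin N → Bool, σ ≠ σ₀ →
      c (fun i => if σ i then -1 else 1) *
        ∏ i, (x i 0 + (if σ i then -1 else 1) * x i 1) = 0 := by
    intro σ hσ
    have hex : ∃ i, σ i ≠ σ₀ i := by
      by_contra h; push_neg at h; exact hσ (funext h)
    obtain ⟨i, hi⟩ := hex
    have hz : (x i 0 + (if σ i then -1 else 1) * x i 1) = 0 := by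
      rcases hx i 0 with h0 | h0 <;> rcases hx i 1 with h1 | h1 <;>
        simp [hσ₀, h0, h1] at hi <;> simp [hi, h0, h1]
    rw [Finset.prod_eq_zero (Finset.mem_univ i) hz, mul_zero]
  have hsum : (∑ σ : Fin N → Bool,
      c (fun i => if σ i then -1 else 1) *
        ∏ i, (x i 0 + (if σ i then -1 else 1) * x i 1)) =
      c (fun i => if σ₀ i then -1 else 1) *
        ∏ i, (x i 0 + (if σ₀ i then -1 else 1) * x i 1) :=
    Fintype.sum_eq_single σ₀ (fun σ hσ => hzero σ hσ)
  have hfac : ∀ i, (x i 0 + (if σ₀ i then -1 else 1) * x i 1) = 2 * x i 0 := by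
    intro i
    rcases hx i 0 with h0 | h0 <;> rcases hx i 1 with h1 | h1 <;>
      simp [hσ₀, h0, h1] <;> norm_num
  have hprod : (∏ i, (x i 0 + (if σ₀ i then -1 else 1) * x i 1)) =
      2 ^ N * ∏ i, x i 0 := by
    rw [Finset.prod_congr rfl (fun i _ => hfac i), Finset.prod_mul_distrib,
      Finset.prod_const, Finset.card_univ, Fintype.card_fin]
  have hcv : c (fun i => if σ₀ i then -1 else 1) = 1 ∨
      c (fun i => if σ₀ i then -1 else 1) = -1 := by
    apply hc
    intro i
    by_cases h : σ₀ i <;> simp [h]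
  have hpv : (∏ i, x i 0) = 1 ∨ (∏ i, x i 0) = -1 := by
    apply Finset.prod_induction _ (fun a => a = 1 ∨ a = -1)
    · rintro a b (rfl | rfl) (rfl | rfl) <;> norm_num
    · left; rfl
    · intro i _; exact hx i 0
  have key : c (fun i => if σ₀ i then -1 else 1) *
      ∏ i, (x i 0 + (if σ₀ i then -1 else 1) * x i 1) = 2 ^ N ∨
      c (fun i => if σ₀ i then -1 else 1) *
      ∏ i, (x i 0 + (if σ₀ i then -1 else 1) * x i 1) = -2 ^ N := by
    rw [hprod]
    rcases hcv with h | h <;> rcases hpv with h' | h' <;> rw [h, h'] <;> ring_nf <;> simp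
  rw [hsum]
  refine ⟨key, ?_⟩
  rcases key with h | h <;> rw [h] <;> simp [abs_of_nonneg, pow_nonneg]
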